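/- Let w and w' be distinct vertices of P_T for a {1,3}-tree T, with associated disjoint collections of leaf-paths H_w and H_{w'} (so w = (1/2)𝟙_{H_w}, w' = (1/2)𝟙_{H_{w'}}). Then w and w' are adjacent on the polytope P_T (joined by an edge of P_T) if and only if the symmetric difference H_w △ H_{w'} is a single leaf-path. -/

import Mathlib

open Finset
open scoped Classical

noncomputable section

/-- The Liu–Osserman polytope `P_T` of a `{1,3}`-graph, as a subset of `ℝ^{Sym2 V}`
supported on the edges of `T`: at each internal (degree-3) node with incident edges
`a, b, c` the triangle inequalities `w_a ≤ w_b + w_c` (in all three versions) and the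
perimeter inequality `w_a + w_b + w_c ≤ 1` hold, and `0 ≤ w_e ≤ 1/2` for any edge both
of whose endpoints are leaves. -/
def memP {V : Type*} [Fintype V] [DecidableEq V] (T : SimpleGraph V) [DecidableRel T.Adj]
    (w : Sym2 V → ℝ) : Prop :=
  (∀ e, e ∉ T.edgeSet → w e = 0) ∧
  (∀ v : V, T.degree v = 3 →
    (∀ a ∈ T.incidenceFinset v, w a ≤ ∑ b ∈ (T.incidenceFinset v).erase a, w b) ∧
    ∑ a ∈ T.incidenceFinset v, w a ≤ 1) ∧
  (∀ e ∈ T.edgeSet, (∀ v ∈ e, T.degree v = 1) → 0 ≤ w e ∧ w e ≤ 1 / 2)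

/-- `H` is (the edge set of) a collection of pairwise disjoint leaf-paths of the
`{1,3}`-tree `T`: a set of edges in which every internal (degree-3) node of `T` has
degree `0` or `2` (an internally Eulerian subgraph of a tree). -/
def isLeafPathCollection {V : Type*} [Fintype V] [DecidableEq V] (T : SimpleGraph V)
    [DecidableRel T.Adj] (H : Finset (Sym2 V)) : Prop :=
  H ⊆ T.edgeFinset ∧
  ∀ v : V, T.degree v = 3 →
    (H.filter (fun e => v ∈ e)).card = 0 ∨ (H.filter (fun e => v ∈ e)).card = 2

/-- The leaf-edges of `T`: edges incident to a degree-1 vertex. -/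
def leafEdges {V : Type*} [Fintype V] [DecidableEq V] (T : SimpleGraph V)
    [DecidableRel T.Adj] : Finset (Sym2 V) :=
  T.edgeFinset.filter (fun e => ∃ v ∈ e, T.degree v = 1)


/-- The point `(1/2)·𝟙_H` associated to a collection `H` of disjoint leaf-paths. -/
def halfIndicator {V : Type*} [Fintype V] [DecidableEq V] (H : Finset (Sym2 V)) :
    Sym2 V → ℝ :=
  fun e => if e ∈ H then 1 / 2 else 0

/-- `S` is (the edge set of) a single leaf-path of `T`: a nonempty collection of disjoint
leaf-paths that cannot be split into two nonempty such collections. -/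
def isSingleLeafPath {V : Type*} [Fintype V] [DecidableEq V] (T : SimpleGraph V)
    [DecidableRel T.Adj] (S : Finset (Sym2 V)) : Prop :=
  isLeafPathCollection T S ∧ S.Nonempty ∧
  ¬ ∃ A B : Finset (Sym2 V), A.Nonempty ∧ B.Nonempty ∧ Disjoint A B ∧ A ∪ B = S ∧
      isLeafPathCollection T A ∧ isLeafPathCollection T B

set_option linter.unusedSectionVars false

section helpers

variable {V : Type*} [Fintype V] [DecidableEq V] (T : SimpleGraph V) [DecidableRel T.Adj]

lemma transfer_eq {a b u1 u2 r : ℝ} (ha : 0 < a) (hb : 0 < b) (hab : a + b = 1)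
    (h1 : u1 ≤ r) (h2 : u2 ≤ r) (h : a * u1 + b * u2 = r) : u1 = r ∧ u2 = r := by
  have hr : a * r + b * r = r := by rw [← add_mul, hab, one_mul]
  constructor
  · by_contra hc
    have h1' : a * u1 < a * r := mul_lt_mul_of_pos_left (lt_of_le_of_ne h1 hc) ha
    have h2' : b * u2 ≤ b * r := mul_le_mul_of_nonneg_left h2 hb.le
    linarith
  · by_contra hc
    have h2' : b * u2 < b * r := mul_lt_mul_of_pos_left (lt_of_le_of_ne h2 hc) hb
    have h1' : a * u1 ≤ a * r := mul_le_mul_of_nonneg_left h1 ha.le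
    linarith

variable {T}

lemma filter_incidence {H : Finset (Sym2 V)} (hH : H ⊆ T.edgeFinset) (v : V) :
    (T.incidenceFinset v).filter (fun e => e ∈ H) = H.filter (fun e => v ∈ e) := by
  ext e
  simp only [SimpleGraph.incidenceFinset_eq_filter, Finset.mem_filter]
  constructor
  · rintro ⟨⟨_, hv⟩, hmem⟩; exact ⟨hmem, hv⟩
  · rintro ⟨hmem, hv⟩; exact ⟨⟨hH hmem, hv⟩, hmem⟩

lemma exists_triple_mem {v : V} (hv : T.degree v = 3) {e : Sym2 V}
    (he : e ∈ T.incidenceFinset v) :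
    ∃ f g, e ≠ f ∧ e ≠ g ∧ f ≠ g ∧ T.incidenceFinset v = {e, f, g} := by
  have hc : (T.incidenceFinset v).card = 3 := by
    rw [SimpleGraph.card_incidenceFinset_eq_degree]; exact hv
  have hc2 : ((T.incidenceFinset v).erase e).card = 2 := by
    rw [Finset.card_erase_of_mem he, hc]
  obtain ⟨f, g, hfg, hfgE⟩ := Finset.card_eq_two.mp hc2
  refine ⟨f, g, ?_, ?_, hfg, ?_⟩
  · intro h; subst h
    have : e ∈ (T.incidenceFinset v).erase e := by rw [hfgE]; simp
    exact (Finset.notMem_erase e _) this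
  · intro h; subst h
    have : e ∈ (T.incidenceFinset v).erase e := by rw [hfgE]; simp
    exact (Finset.notMem_erase e _) this
  · rw [← hfgE, Finset.insert_erase he]

lemma erase_insert_pair {e1 e2 e3 : Sym2 V} (h12 : e1 ≠ e2) (h13 : e1 ≠ e3) (h23 : e2 ≠ e3) :
    ({e1, e2, e3} : Finset (Sym2 V)).erase e1 = {e2, e3} ∧
    ({e1, e2, e3} : Finset (Sym2 V)).erase e2 = {e1, e3} ∧
    ({e1, e2, e3} : Finset (Sym2 V)).erase e3 = {e1, e2} := by
  refine ⟨?_, ?_, ?_⟩ <;> (ext x; simp only [Finset.mem_erase, Finset.mem_insert,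
    Finset.mem_singleton]; constructor)
  · rintro ⟨hne, h⟩; tauto
  · rintro (rfl | rfl) <;> tauto
  · rintro ⟨hne, h⟩; tauto
  · rintro (rfl | rfl) <;> tauto
  · rintro ⟨hne, h⟩; tauto
  · rintro (rfl | rfl) <;> tauto

lemma vertex_ineqs {y : Sym2 V → ℝ} (hy : memP T y) {v : V} (hv : T.degree v = 3)
    {e1 e2 e3 : Sym2 V} (h12 : e1 ≠ e2) (h13 : e1 ≠ e3) (h23 : e2 ≠ e3)
    (hI : T.incidenceFinset v = {e1, e2, e3}) :
    y e1 ≤ y e2 + y e3 ∧ y e2 ≤ y e1 + y e3 ∧ y e3 ≤ y e1 + y e2 ∧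
      y e1 + y e2 + y e3 ≤ 1 := by
  obtain ⟨htri, hper⟩ := hy.2.1 v hv
  obtain ⟨er1, er2, er3⟩ := erase_insert_pair h12 h13 h23
  have m1 : e1 ∈ T.incidenceFinset v := by rw [hI]; simp
  have m2 : e2 ∈ T.incidenceFinset v := by rw [hI]; simp
  have m3 : e3 ∈ T.incidenceFinset v := by rw [hI]; simp
  have t1 := htri e1 m1
  have t2 := htri e2 m2
  have t3 := htri e3 m3
  rw [hI, er1, Finset.sum_pair h23] at t1
  rw [hI, er2, Finset.sum_pair h13] at t2
  rw [hI, er3, Finset.sum_pair h12] at t3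
  rw [hI, Finset.sum_insert (by simp [h12, h13]), Finset.sum_pair h23] at hper
  exact ⟨t1, t2, t3, by linarith⟩

lemma mem_incidence_of_mem {v : V} {e : Sym2 V} (he : e ∈ T.edgeFinset) (hv : v ∈ e) :
    e ∈ T.incidenceFinset v := by
  rw [SimpleGraph.incidenceFinset_eq_filter, Finset.mem_filter]; exact ⟨he, hv⟩

lemma bounds (hdeg : ∀ v : V, T.degree v = 1 ∨ T.degree v = 3) {y : Sym2 V → ℝ}
    (hy : memP T y) {e : Sym2 V} (he : e ∈ T.edgeFinset) : 0 ≤ y e ∧ y e ≤ 1 / 2 := by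
  by_cases h3 : ∃ v ∈ e, T.degree v = 3
  · obtain ⟨v, hve, hv3⟩ := h3
    have hei : e ∈ T.incidenceFinset v := mem_incidence_of_mem he hve
    obtain ⟨f, g, hef, heg, hfg, hI⟩ := exists_triple_mem hv3 hei
    obtain ⟨t1, t2, t3, hper⟩ := vertex_ineqs hy hv3 hef heg hfg hI
    constructor <;> linarith
  · push_neg at h3
    have : ∀ v ∈ e, T.degree v = 1 := by
      intro v hv; rcases hdeg v with h | h
      · exact h
      · exact absurd h (h3 v hv)
    exact hy.2.2 e (SimpleGraph.mem_edgeFinset.mp he) this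

end helpers

section helpers2
variable {V : Type*} [Fintype V] [DecidableEq V] {T : SimpleGraph V} [DecidableRel T.Adj]

lemma sum_halfIndicator (H : Finset (Sym2 V)) (s : Finset (Sym2 V)) :
    ∑ e ∈ s, halfIndicator H e = ((s.filter (fun e => e ∈ H)).card : ℝ) / 2 := by
  unfold halfIndicator
  rw [Finset.sum_ite, Finset.sum_const, Finset.sum_const_zero]
  simp [div_eq_mul_inv]

lemma halfIndicator_nonneg (H : Finset (Sym2 V)) (e : Sym2 V) : 0 ≤ halfIndicator H e := by
  unfold halfIndicator; split <;> norm_num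

lemma memP_half {H : Finset (Sym2 V)} (hH : isLeafPathCollection T H) :
    memP T (halfIndicator H) := by
  refine ⟨?_, ?_, ?_⟩
  · intro e he
    have : e ∉ H := fun hmem => he (SimpleGraph.mem_edgeFinset.mp (hH.1 hmem))
    simp [halfIndicator, this]
  · intro v hv
    have hfilt := hH.2 v hv
    have hfe : (T.incidenceFinset v).filter (fun e => e ∈ H) = H.filter (fun e => v ∈ e) :=
      filter_incidence hH.1 v
    constructor
    · intro a ha
      by_cases haH : a ∈ H
      · -- there is another edge b ∈ H incident to v
        have ha2 : a ∈ (T.incidenceFinset v).filter (fun e => e ∈ H) := by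
          rw [Finset.mem_filter]; exact ⟨ha, haH⟩
        have hc2 : ((T.incidenceFinset v).filter (fun e => e ∈ H)).card = 2 := by
          rw [hfe]
          rcases hfilt with h | h
          · exfalso; rw [hfe] at ha2
            exact Finset.notMem_empty a (Finset.card_eq_zero.mp h ▸ ha2)
          · exact h
        have : 0 < (((T.incidenceFinset v).filter (fun e => e ∈ H)).erase a).card := by
          rw [Finset.card_erase_of_mem ha2, hc2]; norm_num
        obtain ⟨b, hb⟩ := Finset.card_pos.mp this
        have hba : b ≠ a := (Finset.mem_erase.mp hb).1
        have hbf : b ∈ (T.incidenceFinset v).filter (fun e => e ∈ H) :=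
          (Finset.mem_erase.mp hb).2
        have hbI : b ∈ (T.incidenceFinset v).erase a :=
          Finset.mem_erase.mpr ⟨hba, (Finset.mem_filter.mp hbf).1⟩
        have hbH : b ∈ H := (Finset.mem_filter.mp hbf).2
        calc halfIndicator H a = 1 / 2 := by simp [halfIndicator, haH]
          _ = halfIndicator H b := by simp [halfIndicator, hbH]
          _ ≤ ∑ e ∈ (T.incidenceFinset v).erase a, halfIndicator H e :=
            Finset.single_le_sum (fun e _ => halfIndicator_nonneg H e) hbI
      · have : halfIndicator H a = 0 := by simp [halfIndicator, haH]
        rw [this]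
        exact Finset.sum_nonneg (fun e _ => halfIndicator_nonneg H e)
    · rw [sum_halfIndicator, hfe]
      rcases hfilt with h | h <;> rw [h] <;> norm_num
  · intro e _ _
    constructor
    · exact halfIndicator_nonneg H e
    · unfold halfIndicator; split <;> norm_num

lemma memP_combo {x1 x2 : Sym2 V → ℝ} (hx1 : memP T x1) (hx2 : memP T x2)
    {a b : ℝ} (ha : 0 ≤ a) (hb : 0 ≤ b) (hab : a + b = 1) :
    memP T (fun e => a * x1 e + b * x2 e) := by
  refine ⟨?_, ?_, ?_⟩
  · intro e he; dsimp only; rw [hx1.1 e he, hx2.1 e he]; ring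
  · intro v hv
    obtain ⟨ht1, hp1⟩ := hx1.2.1 v hv
    obtain ⟨ht2, hp2⟩ := hx2.2.1 v hv
    constructor
    · intro c hc
      have e1 := ht1 c hc
      have e2 := ht2 c hc
      have hs : ∑ e ∈ (T.incidenceFinset v).erase c, (a * x1 e + b * x2 e)
          = a * ∑ e ∈ (T.incidenceFinset v).erase c, x1 e
            + b * ∑ e ∈ (T.incidenceFinset v).erase c, x2 e := by
        rw [Finset.sum_add_distrib, Finset.mul_sum, Finset.mul_sum]
      rw [hs]
      have := mul_le_mul_of_nonneg_left e1 ha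
      have := mul_le_mul_of_nonneg_left e2 hb
      dsimp only
      linarith
    · have hs : ∑ e ∈ T.incidenceFinset v, (a * x1 e + b * x2 e)
          = a * ∑ e ∈ T.incidenceFinset v, x1 e + b * ∑ e ∈ T.incidenceFinset v, x2 e := by
        rw [Finset.sum_add_distrib, Finset.mul_sum, Finset.mul_sum]
      rw [hs]
      have := mul_le_mul_of_nonneg_left hp1 ha
      have := mul_le_mul_of_nonneg_left hp2 hb
      linarith
  · intro e he hl
    obtain ⟨l1, u1⟩ := hx1.2.2 e he hl
    obtain ⟨l2, u2⟩ := hx2.2.2 e he hl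
    constructor
    · have := mul_nonneg ha l1; have := mul_nonneg hb l2; dsimp only; linarith
    · have := mul_le_mul_of_nonneg_left u1 ha
      have := mul_le_mul_of_nonneg_left u2 hb
      dsimp only
      linarith

lemma halfIndicator_inj {H H' : Finset (Sym2 V)}
    (h : halfIndicator H = halfIndicator H') : H = H' := by
  ext e
  have := congrFun h e
  unfold halfIndicator at this
  by_cases h1 : e ∈ H <;> by_cases h2 : e ∈ H' <;> simp [h1, h2] at this ⊢ <;> norm_num at this

lemma filter_symmDiff (H H' : Finset (Sym2 V)) (p : Sym2 V → Prop) [DecidablePred p] :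
    (symmDiff H H').filter p = symmDiff (H.filter p) (H'.filter p) := by
  ext e
  simp only [Finset.mem_filter, Finset.mem_symmDiff]
  tauto

lemma lpc_symmDiff {H H' : Finset (Sym2 V)} (hH : isLeafPathCollection T H)
    (hH' : isLeafPathCollection T H') : isLeafPathCollection T (symmDiff H H') := by
  constructor
  · intro e he
    rw [Finset.mem_symmDiff] at he
    rcases he with ⟨h, _⟩ | ⟨h, _⟩
    · exact hH.1 h
    · exact hH'.1 h
  · intro v hv
    have hA := hH.2 v hv
    have hB := hH'.2 v hv
    set A := H.filter (fun e => v ∈ e) with hAdef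
    set B := H'.filter (fun e => v ∈ e) with hBdef
    have hAI : A ⊆ T.incidenceFinset v := by
      rw [hAdef, ← filter_incidence hH.1 v]; exact Finset.filter_subset _ _
    have hBI : B ⊆ T.incidenceFinset v := by
      rw [hBdef, ← filter_incidence hH'.1 v]; exact Finset.filter_subset _ _
    have hUcard : (A ∪ B).card ≤ 3 := by
      calc (A ∪ B).card ≤ (T.incidenceFinset v).card :=
            Finset.card_le_card (Finset.union_subset hAI hBI)
        _ = 3 := by rw [SimpleGraph.card_incidenceFinset_eq_degree]; exact hv
    have hfs : (symmDiff H H').filter (fun e => v ∈ e) = symmDiff A B := by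
      rw [hAdef, hBdef, filter_symmDiff]
    rw [hfs]
    have hsd : (symmDiff A B).card = (A \ B).card + (B \ A).card := by
      have : symmDiff A B = (A \ B) ∪ (B \ A) := by
        ext x; simp [Finset.mem_symmDiff, Finset.mem_union, Finset.mem_sdiff]
      rw [this]
      exact Finset.card_union_of_disjoint disjoint_sdiff_sdiff
    have h1 : (A \ B).card + (A ∩ B).card = A.card := Finset.card_sdiff_add_card_inter A B
    have h2 : (B \ A).card + (B ∩ A).card = B.card := Finset.card_sdiff_add_card_inter B A
    have h3 : (A ∪ B).card + (A ∩ B).card = A.card + B.card :=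
      Finset.card_union_add_card_inter A B
    have h4 : (A ∩ B).card = (B ∩ A).card := by rw [Finset.inter_comm]
    rw [hsd]
    omega

end helpers2

section helpers3
variable {V : Type*} [Fintype V] [DecidableEq V] {T : SimpleGraph V} [DecidableRel T.Adj]

lemma exists_third {v : V} (hv : T.degree v = 3) {e f : Sym2 V}
    (he : e ∈ T.incidenceFinset v) (hf : f ∈ T.incidenceFinset v) (hef : e ≠ f) :
    ∃ g, e ≠ g ∧ f ≠ g ∧ T.incidenceFinset v = {e, f, g} := by
  have hc : (T.incidenceFinset v).card = 3 := by
    rw [SimpleGraph.card_incidenceFinset_eq_degree]; exact hv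
  have hf1 : f ∈ (T.incidenceFinset v).erase e := Finset.mem_erase.mpr ⟨fun h => hef h.symm, hf⟩
  have hc1 : (((T.incidenceFinset v).erase e).erase f).card = 1 := by
    rw [Finset.card_erase_of_mem hf1, Finset.card_erase_of_mem he, hc]
  obtain ⟨g, hg⟩ := Finset.card_eq_one.mp hc1
  have hgmem : g ∈ ((T.incidenceFinset v).erase e).erase f := by rw [hg]; simp
  have hgf : g ≠ f := (Finset.mem_erase.mp hgmem).1
  have hge : g ≠ e := (Finset.mem_erase.mp (Finset.mem_erase.mp hgmem).2).1
  have hgI : g ∈ T.incidenceFinset v := (Finset.mem_erase.mp (Finset.mem_erase.mp hgmem).2).2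
  refine ⟨g, hge.symm, hgf.symm, ?_⟩
  ext x
  simp only [Finset.mem_insert, Finset.mem_singleton]
  constructor
  · intro hx
    by_cases hxe : x = e
    · exact Or.inl hxe
    by_cases hxf : x = f
    · exact Or.inr (Or.inl hxf)
    have : x ∈ ((T.incidenceFinset v).erase e).erase f :=
      Finset.mem_erase.mpr ⟨hxf, Finset.mem_erase.mpr ⟨hxe, hx⟩⟩
    rw [hg] at this
    exact Or.inr (Or.inr (Finset.mem_singleton.mp this))
  · rintro (rfl | rfl | rfl) <;> assumption

lemma mem_of_incidence {v : V} {e : Sym2 V} (he : e ∈ T.incidenceFinset v) :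
    e ∈ T.edgeFinset ∧ v ∈ e := by
  rw [SimpleGraph.incidenceFinset_eq_filter, Finset.mem_filter] at he
  exact he

/-- If `e, f ∈ H` are distinct edges at an internal node `v`, the third edge `g ∉ H`. -/
lemma third_out {H : Finset (Sym2 V)} (hH : isLeafPathCollection T H) {v : V}
    (hv : T.degree v = 3) {e f g : Sym2 V} (hef : e ≠ f) (heg : e ≠ g) (hfg : f ≠ g)
    (hI : T.incidenceFinset v = {e, f, g}) (he : e ∈ H) (hf : f ∈ H) : g ∉ H := by
  intro hg
  have hsub : ({e, f, g} : Finset (Sym2 V)) ⊆ H.filter (fun e => v ∈ e) := by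
    intro x hx
    simp only [Finset.mem_insert, Finset.mem_singleton] at hx
    have hxI : x ∈ T.incidenceFinset v := by
      rw [hI]
      simp only [Finset.mem_insert, Finset.mem_singleton]
      exact hx
    have hxv : v ∈ x := (mem_of_incidence hxI).2
    rcases hx with rfl | rfl | rfl
    · exact Finset.mem_filter.mpr ⟨he, hxv⟩
    · exact Finset.mem_filter.mpr ⟨hf, hxv⟩
    · exact Finset.mem_filter.mpr ⟨hg, hxv⟩
  have h3 : 3 ≤ (H.filter (fun e => v ∈ e)).card := by
    calc 3 = ({e, f, g} : Finset (Sym2 V)).card := by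
          rw [Finset.card_insert_of_notMem (by simp [hef, heg]),
            Finset.card_insert_of_notMem (by simp [hfg]), Finset.card_singleton]
      _ ≤ _ := Finset.card_le_card hsub
  rcases hH.2 v hv with h | h <;> omega

/-- If `e ∈ H`, `f ∉ H` at an internal node `v`, the third edge `g ∈ H`. -/
lemma third_in {H : Finset (Sym2 V)} (hH : isLeafPathCollection T H) {v : V}
    (hv : T.degree v = 3) {e f g : Sym2 V} (hef : e ≠ f) (heg : e ≠ g) (hfg : f ≠ g)
    (hI : T.incidenceFinset v = {e, f, g}) (he : e ∈ H) (hf : f ∉ H) : g ∈ H := by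
  by_contra hg
  have hsub : H.filter (fun e => v ∈ e) ⊆ {e} := by
    intro x hx
    obtain ⟨hxH, hxv⟩ := Finset.mem_filter.mp hx
    have hxI : x ∈ T.incidenceFinset v :=
      mem_incidence_of_mem (hH.1 hxH) hxv
    rw [hI] at hxI
    simp only [Finset.mem_insert, Finset.mem_singleton] at hxI
    rcases hxI with rfl | rfl | rfl
    · simp
    · exact absurd hxH hf
    · exact absurd hxH hg
  have hmem : e ∈ H.filter (fun e => v ∈ e) := by
    have heI : e ∈ T.incidenceFinset v := by rw [hI]; simp
    exact Finset.mem_filter.mpr ⟨he, (mem_of_incidence heI).2⟩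
  have h1 : (H.filter (fun e => v ∈ e)).card = 1 := by
    have hle : (H.filter (fun e => v ∈ e)).card ≤ 1 :=
      le_trans (Finset.card_le_card hsub) (by simp)
    have hge : 1 ≤ (H.filter (fun e => v ∈ e)).card := Finset.card_pos.mpr ⟨e, hmem⟩
    omega
  rcases hH.2 v hv with h | h <;> omega

/-- If `e, f ∉ H` at an internal node `v`, the third edge `g ∉ H`. -/
lemma third_none {H : Finset (Sym2 V)} (hH : isLeafPathCollection T H) {v : V}
    (hv : T.degree v = 3) {e f g : Sym2 V} (hef : e ≠ f) (heg : e ≠ g) (hfg : f ≠ g)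
    (hI : T.incidenceFinset v = {e, f, g}) (he : e ∉ H) (hf : f ∉ H) : g ∉ H := by
  intro hg
  have hsub : H.filter (fun e => v ∈ e) ⊆ {g} := by
    intro x hx
    obtain ⟨hxH, hxv⟩ := Finset.mem_filter.mp hx
    have hxI : x ∈ T.incidenceFinset v := mem_incidence_of_mem (hH.1 hxH) hxv
    rw [hI] at hxI
    simp only [Finset.mem_insert, Finset.mem_singleton] at hxI
    rcases hxI with rfl | rfl | rfl
    · exact absurd hxH he
    · exact absurd hxH hf
    · simp
  have hmem : g ∈ H.filter (fun e => v ∈ e) := by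
    have hgI : g ∈ T.incidenceFinset v := by rw [hI]; simp
    exact Finset.mem_filter.mpr ⟨hg, (mem_of_incidence hgI).2⟩
  have h1 : (H.filter (fun e => v ∈ e)).card = 1 := by
    have hle : (H.filter (fun e => v ∈ e)).card ≤ 1 :=
      le_trans (Finset.card_le_card hsub) (by simp)
    have hge : 1 ≤ (H.filter (fun e => v ∈ e)).card := Finset.card_pos.mpr ⟨g, hmem⟩
    omega
  rcases hH.2 v hv with h | h <;> omega

end helpers3

section helpers4
variable {V : Type*} [Fintype V] [DecidableEq V] {T : SimpleGraph V} [DecidableRel T.Adj]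

/-- Tightness propagation: two `D`-edges at `v` on the same side (`H`). -/
lemma rel_same {H H' : Finset (Sym2 V)} (hH : isLeafPathCollection T H)
    (hH' : isLeafPathCollection T H') {x1 x2 : Sym2 V → ℝ}
    (hx1 : memP T x1) (hx2 : memP T x2) {a b c d : ℝ} (ha : 0 < a) (hb : 0 < b)
    (hab : a + b = 1)
    (hx : ∀ e, a * x1 e + b * x2 e = c * halfIndicator H e + d * halfIndicator H' e)
    {v : V} (hv : T.degree v = 3) {e f : Sym2 V} (hve : v ∈ e) (hvf : v ∈ f) (hef : e ≠ f)
    (heH : e ∈ H) (heH' : e ∉ H') (hfH : f ∈ H) (hfH' : f ∉ H') : x1 e = x1 f := by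
  have heI : e ∈ T.incidenceFinset v := mem_incidence_of_mem (hH.1 heH) hve
  have hfI : f ∈ T.incidenceFinset v := mem_incidence_of_mem (hH.1 hfH) hvf
  obtain ⟨g, heg, hfg, hI⟩ := exists_third hv heI hfI hef
  have hgH : g ∉ H := third_out hH hv hef heg hfg hI heH hfH
  have hgH' : g ∉ H' := third_none hH' hv hef heg hfg hI heH' hfH'
  have hxe := hx e; have hxf := hx f; have hxg := hx g
  simp only [halfIndicator, if_pos heH, if_neg heH', if_pos hfH, if_neg hfH',
    if_neg hgH, if_neg hgH'] at hxe hxf hxg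
  obtain ⟨t1e, t1f, t1g, t1p⟩ := vertex_ineqs hx1 hv hef heg hfg hI
  obtain ⟨t2e, t2f, t2g, t2p⟩ := vertex_ineqs hx2 hv hef heg hfg hI
  have key1 : a * (x1 e - x1 f - x1 g) + b * (x2 e - x2 f - x2 g) = 0 := by
    linear_combination hxe - hxf - hxg
  have key2 : a * (x1 f - x1 e - x1 g) + b * (x2 f - x2 e - x2 g) = 0 := by
    linear_combination hxf - hxe - hxg
  have r1 := transfer_eq ha hb hab (by linarith : x1 e - x1 f - x1 g ≤ 0)
    (by linarith : x2 e - x2 f - x2 g ≤ 0) key1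
  have r2 := transfer_eq ha hb hab (by linarith : x1 f - x1 e - x1 g ≤ 0)
    (by linarith : x2 f - x2 e - x2 g ≤ 0) key2
  have := r1.1; have := r2.1
  linarith

/-- Tightness propagation: two `D`-edges at `v` on opposite sides. -/
lemma rel_cross {H H' : Finset (Sym2 V)} (hH : isLeafPathCollection T H)
    (hH' : isLeafPathCollection T H') {x1 x2 : Sym2 V → ℝ}
    (hx1 : memP T x1) (hx2 : memP T x2) {a b c d : ℝ} (ha : 0 < a) (hb : 0 < b)
    (hab : a + b = 1) (hcd : c + d = 1)
    (hx : ∀ e, a * x1 e + b * x2 e = c * halfIndicator H e + d * halfIndicator H' e)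
    {v : V} (hv : T.degree v = 3) {e f : Sym2 V} (hve : v ∈ e) (hvf : v ∈ f) (hef : e ≠ f)
    (heH : e ∈ H) (heH' : e ∉ H') (hfH : f ∉ H) (hfH' : f ∈ H') : x1 e + x1 f = 1 / 2 := by
  have heI : e ∈ T.incidenceFinset v := mem_incidence_of_mem (hH.1 heH) hve
  have hfI : f ∈ T.incidenceFinset v := mem_incidence_of_mem (hH'.1 hfH') hvf
  obtain ⟨g, heg, hfg, hI⟩ := exists_third hv heI hfI hef
  have hgH : g ∈ H := third_in hH hv hef heg hfg hI heH hfH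
  have hgH' : g ∈ H' := by
    have : f ≠ e := hef.symm
    exact third_in hH' hv (Ne.symm hef) hfg heg (by rw [hI]; ext x; simp; tauto) hfH' heH'
  have hxe := hx e; have hxf := hx f; have hxg := hx g
  simp only [halfIndicator, if_pos heH, if_neg heH', if_neg hfH, if_pos hfH',
    if_pos hgH, if_pos hgH'] at hxe hxf hxg
  obtain ⟨t1e, t1f, t1g, t1p⟩ := vertex_ineqs hx1 hv hef heg hfg hI
  obtain ⟨t2e, t2f, t2g, t2p⟩ := vertex_ineqs hx2 hv hef heg hfg hI
  have key1 : a * (x1 g - x1 e - x1 f) + b * (x2 g - x2 e - x2 f) = 0 := by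
    linear_combination hxg - hxe - hxf
  have key2 : a * (x1 e + x1 f + x1 g) + b * (x2 e + x2 f + x2 g) = 1 := by
    linear_combination hxe + hxf + hxg + hcd
  have r1 := transfer_eq ha hb hab (by linarith : x1 g - x1 e - x1 f ≤ 0)
    (by linarith : x2 g - x2 e - x2 f ≤ 0) key1
  have r2 := transfer_eq ha hb hab t1p t2p key2
  have := r1.1; have := r2.1
  linarith

/-- The uniform equalities: value 0 off `H ∪ H'`, value 1/2 on `H ∩ H'`. -/
lemma derive_E12 (hdeg : ∀ v : V, T.degree v = 1 ∨ T.degree v = 3)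
    {H H' : Finset (Sym2 V)} (hH : isLeafPathCollection T H)
    (hH' : isLeafPathCollection T H') {x1 x2 : Sym2 V → ℝ}
    (hx1 : memP T x1) (hx2 : memP T x2) {a b c d : ℝ} (ha : 0 < a) (hb : 0 < b)
    (hab : a + b = 1) (hcd : c + d = 1)
    (hx : ∀ e, a * x1 e + b * x2 e = c * halfIndicator H e + d * halfIndicator H' e) :
    (∀ e ∈ T.edgeFinset, e ∉ H → e ∉ H' → x1 e = 0) ∧
    (∀ e, e ∈ H → e ∈ H' → x1 e = 1 / 2) := by
  constructor
  · intro e he heH heH'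
    obtain ⟨l1, _⟩ := bounds hdeg hx1 he
    obtain ⟨l2, _⟩ := bounds hdeg hx2 he
    have hxe := hx e
    simp only [halfIndicator, if_neg heH, if_neg heH'] at hxe
    have key : a * (-x1 e) + b * (-x2 e) = 0 := by linear_combination -hxe
    have r := transfer_eq ha hb hab (by linarith : -x1 e ≤ 0) (by linarith : -x2 e ≤ 0) key
    linarith [r.1]
  · intro e heH heH'
    have he : e ∈ T.edgeFinset := hH.1 heH
    obtain ⟨_, u1⟩ := bounds hdeg hx1 he
    obtain ⟨_, u2⟩ := bounds hdeg hx2 he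
    have hxe := hx e
    simp only [halfIndicator, if_pos heH, if_pos heH'] at hxe
    have key : a * x1 e + b * x2 e = 1 / 2 := by linear_combination hxe + hcd / 2
    exact (transfer_eq ha hb hab u1 u2 key).1

end helpers4

section helpers5
variable {V : Type*} [Fintype V] [DecidableEq V] {T : SimpleGraph V} [DecidableRel T.Adj]

lemma deg3_of_two_edges (hdeg : ∀ v : V, T.degree v = 1 ∨ T.degree v = 3) {v : V}
    {b f : Sym2 V} (hb : b ∈ T.edgeFinset) (hf : f ∈ T.edgeFinset) (hvb : v ∈ b)
    (hvf : v ∈ f) (hbf : b ≠ f) : T.degree v = 3 := by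
  have hsub : ({b, f} : Finset (Sym2 V)) ⊆ T.incidenceFinset v := by
    intro x hx
    simp only [Finset.mem_insert, Finset.mem_singleton] at hx
    rcases hx with rfl | rfl
    · exact mem_incidence_of_mem hb hvb
    · exact mem_incidence_of_mem hf hvf
  have h2 : 2 ≤ T.degree v := by
    rw [← SimpleGraph.card_incidenceFinset_eq_degree]
    calc 2 = ({b, f} : Finset (Sym2 V)).card := by
          rw [Finset.card_insert_of_notMem (by simp [hbf]), Finset.card_singleton]
      _ ≤ _ := Finset.card_le_card hsub
  rcases hdeg v with h | h <;> omega

lemma key_segment (hdeg : ∀ v : V, T.degree v = 1 ∨ T.degree v = 3)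
    {H H' : Finset (Sym2 V)} (hH : isLeafPathCollection T H)
    (hH' : isLeafPathCollection T H')
    (hsingle : isSingleLeafPath T (symmDiff H H')) {y : Sym2 V → ℝ} (hy : memP T y)
    (hE1 : ∀ e ∈ T.edgeFinset, e ∉ H → e ∉ H' → y e = 0)
    (hE2 : ∀ e, e ∈ H → e ∈ H' → y e = 1 / 2)
    (hsame : ∀ v : V, T.degree v = 3 → ∀ e f, v ∈ e → v ∈ f → e ≠ f →
       e ∈ H → e ∉ H' → f ∈ H → f ∉ H' → y e = y f)
    (hsame' : ∀ v : V, T.degree v = 3 → ∀ e f, v ∈ e → v ∈ f → e ≠ f →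
       e ∈ H' → e ∉ H → f ∈ H' → f ∉ H → y e = y f)
    (hcross : ∀ v : V, T.degree v = 3 → ∀ e f, v ∈ e → v ∈ f → e ≠ f →
       e ∈ H → e ∉ H' → f ∈ H' → f ∉ H → y e + y f = 1 / 2) :
    y ∈ segment ℝ (halfIndicator H) (halfIndicator H') := by
  classical
  set D := symmDiff H H' with hDdef
  obtain ⟨hDlpc, hDne, hDsingle⟩ := hsingle
  obtain ⟨e₀, he₀⟩ := hDne
  set r : Sym2 V → Sym2 V → Prop :=
    fun e f => f ∈ D ∧ ∃ v : V, v ∈ e ∧ v ∈ f with hrdef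
  -- every edge of D is reachable from e₀
  have hreach : ∀ f ∈ D, Relation.ReflTransGen r e₀ f := by
    by_contra hcon
    push_neg at hcon
    obtain ⟨f₀, hf₀D, hf₀⟩ := hcon
    set R := D.filter (fun f => Relation.ReflTransGen r e₀ f) with hRdef
    have hRD : R ⊆ D := Finset.filter_subset _ _
    have hRlpc : isLeafPathCollection T R := by
      constructor
      · exact fun x hx => hDlpc.1 (hRD hx)
      · intro v hv
        rcases hDlpc.2 v hv with h0 | h2
        · left
          have hsub : R.filter (fun e => v ∈ e) ⊆ D.filter (fun e => v ∈ e) :=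
            Finset.filter_subset_filter _ hRD
          have := Finset.card_le_card hsub
          omega
        · obtain ⟨p, q, hpq, hpqE⟩ := Finset.card_eq_two.mp h2
          have hp : p ∈ D.filter (fun e => v ∈ e) := by rw [hpqE]; simp
          have hq : q ∈ D.filter (fun e => v ∈ e) := by rw [hpqE]; simp
          have hpD : p ∈ D := (Finset.mem_filter.mp hp).1
          have hqD : q ∈ D := (Finset.mem_filter.mp hq).1
          have hvp : v ∈ p := (Finset.mem_filter.mp hp).2
          have hvq : v ∈ q := (Finset.mem_filter.mp hq).2
          have hstep_pq : p ∈ R → q ∈ R := fun hpR =>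
            Finset.mem_filter.mpr ⟨hqD,
              Relation.ReflTransGen.tail (Finset.mem_filter.mp hpR).2 ⟨hqD, v, hvp, hvq⟩⟩
          have hstep_qp : q ∈ R → p ∈ R := fun hqR =>
            Finset.mem_filter.mpr ⟨hpD,
              Relation.ReflTransGen.tail (Finset.mem_filter.mp hqR).2 ⟨hpD, v, hvq, hvp⟩⟩
          have hfil : R.filter (fun e => v ∈ e) = (D.filter (fun e => v ∈ e)) ∩ R := by
            ext x
            simp only [hRdef, Finset.mem_filter, Finset.mem_inter]
            tauto
          rw [hfil, hpqE]
          by_cases hpR : p ∈ R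
          · right
            have hqR := hstep_pq hpR
            have hEq : ({p, q} : Finset (Sym2 V)) ∩ R = {p, q} := by
              ext x
              simp only [Finset.mem_inter, Finset.mem_insert, Finset.mem_singleton]
              constructor
              · tauto
              · rintro (rfl | rfl)
                · exact ⟨Or.inl rfl, hpR⟩
                · exact ⟨Or.inr rfl, hqR⟩
            rw [hEq, Finset.card_insert_of_notMem (by simp [hpq]), Finset.card_singleton]
          · left
            have hqR : q ∉ R := fun h => hpR (hstep_qp h)
            have hEq : ({p, q} : Finset (Sym2 V)) ∩ R = ∅ := by
              ext x
              simp only [Finset.mem_inter, Finset.mem_insert, Finset.mem_singleton,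
                Finset.notMem_empty, iff_false, not_and]
              rintro (rfl | rfl) <;> assumption
            rw [hEq]
            simp
    have hBlpc : isLeafPathCollection T (D \ R) := by
      constructor
      · exact fun x hx => hDlpc.1 (Finset.mem_sdiff.mp hx).1
      · intro v hv
        rcases hDlpc.2 v hv with h0 | h2
        · left
          have hsub : (D \ R).filter (fun e => v ∈ e) ⊆ D.filter (fun e => v ∈ e) :=
            Finset.filter_subset_filter _ (Finset.sdiff_subset)
          have := Finset.card_le_card hsub
          omega
        · obtain ⟨p, q, hpq, hpqE⟩ := Finset.card_eq_two.mp h2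
          have hp : p ∈ D.filter (fun e => v ∈ e) := by rw [hpqE]; simp
          have hq : q ∈ D.filter (fun e => v ∈ e) := by rw [hpqE]; simp
          have hpD : p ∈ D := (Finset.mem_filter.mp hp).1
          have hqD : q ∈ D := (Finset.mem_filter.mp hq).1
          have hvp : v ∈ p := (Finset.mem_filter.mp hp).2
          have hvq : v ∈ q := (Finset.mem_filter.mp hq).2
          have hstep_pq : p ∈ R → q ∈ R := fun hpR =>
            Finset.mem_filter.mpr ⟨hqD,
              Relation.ReflTransGen.tail (Finset.mem_filter.mp hpR).2 ⟨hqD, v, hvp, hvq⟩⟩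
          have hstep_qp : q ∈ R → p ∈ R := fun hqR =>
            Finset.mem_filter.mpr ⟨hpD,
              Relation.ReflTransGen.tail (Finset.mem_filter.mp hqR).2 ⟨hpD, v, hvq, hvp⟩⟩
          have hfil : (D \ R).filter (fun e => v ∈ e) = (D.filter (fun e => v ∈ e)) \ R := by
            ext x
            simp only [Finset.mem_filter, Finset.mem_sdiff]
            tauto
          rw [hfil, hpqE]
          by_cases hpR : p ∈ R
          · left
            have hqR := hstep_pq hpR
            have hEq : ({p, q} : Finset (Sym2 V)) \ R = ∅ := by
              ext x
              simp only [Finset.mem_sdiff, Finset.mem_insert, Finset.mem_singleton,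
                Finset.notMem_empty, iff_false, not_and, not_not]
              rintro (rfl | rfl) <;> assumption
            rw [hEq]
            simp
          · right
            have hqR : q ∉ R := fun h => hpR (hstep_qp h)
            have hEq : ({p, q} : Finset (Sym2 V)) \ R = {p, q} := by
              ext x
              simp only [Finset.mem_sdiff, Finset.mem_insert, Finset.mem_singleton]
              constructor
              · tauto
              · rintro (rfl | rfl)
                · exact ⟨Or.inl rfl, hpR⟩
                · exact ⟨Or.inr rfl, hqR⟩
            rw [hEq, Finset.card_insert_of_notMem (by simp [hpq]), Finset.card_singleton]
    refine hDsingle ⟨R, D \ R, ?_, ?_, Finset.disjoint_sdiff, Finset.union_sdiff_of_subset hRD,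
      hRlpc, hBlpc⟩
    · exact ⟨e₀, Finset.mem_filter.mpr ⟨he₀, Relation.ReflTransGen.refl⟩⟩
    · exact ⟨f₀, Finset.mem_sdiff.mpr ⟨hf₀D, fun h => hf₀ (Finset.mem_filter.mp h).2⟩⟩
  -- the parameter t
  set t := if e₀ ∈ H then y e₀ else 1 / 2 - y e₀ with htdef
  -- values along D
  have main : ∀ f, Relation.ReflTransGen r e₀ f →
      f ∈ D ∧ (f ∈ H → f ∉ H' → y f = t) ∧ (f ∈ H' → f ∉ H → y f = 1 / 2 - t) := by
    intro f h
    induction h with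
    | refl =>
      refine ⟨he₀, ?_, ?_⟩
      · intro h1 h2
        rw [htdef, if_pos h1]
      · intro h1 h2
        rw [htdef, if_neg h2]
        ring
    | @tail b f hsteps hstep ih =>
      obtain ⟨hfD, v, hvb, hvf⟩ := hstep
      refine ⟨hfD, ?_⟩
      by_cases hbf : b = f
      · rw [← hbf]; exact ih.2
      have hbD : b ∈ D := ih.1
      have hv3 : T.degree v = 3 :=
        deg3_of_two_edges hdeg (hDlpc.1 hbD) (hDlpc.1 hfD) hvb hvf hbf
      rcases Finset.mem_symmDiff.mp hbD with ⟨hbH, hbH'⟩ | ⟨hbH', hbH⟩ <;>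
        rcases Finset.mem_symmDiff.mp hfD with ⟨hfH, hfH'⟩ | ⟨hfH', hfH⟩
      · have hrel := hsame v hv3 b f hvb hvf hbf hbH hbH' hfH hfH'
        have hval := ih.2.1 hbH hbH'
        exact ⟨fun _ _ => by linarith, fun h1 h2 => absurd h1 hfH'⟩
      · have hrel := hcross v hv3 b f hvb hvf hbf hbH hbH' hfH' hfH
        have hval := ih.2.1 hbH hbH'
        exact ⟨fun h1 _ => absurd h1 hfH, fun _ _ => by linarith⟩
      · have hrel := hcross v hv3 f b hvf hvb (Ne.symm hbf) hfH hfH' hbH' hbH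
        have hval := ih.2.2 hbH' hbH
        exact ⟨fun _ _ => by linarith, fun h1 _ => absurd h1 hfH'⟩
      · have hrel := hsame' v hv3 b f hvb hvf hbf hbH' hbH hfH' hfH
        have hval := ih.2.2 hbH' hbH
        exact ⟨fun h1 _ => absurd h1 hfH, fun _ _ => by linarith⟩
  -- bounds on t
  have he₀E : e₀ ∈ T.edgeFinset := hDlpc.1 he₀
  obtain ⟨hl0, hu0⟩ := bounds hdeg hy he₀E
  have ht0 : 0 ≤ t := by rw [htdef]; split <;> linarith
  have ht1 : t ≤ 1 / 2 := by rw [htdef]; split <;> linarith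
  -- assemble segment membership
  refine ⟨2 * t, 1 - 2 * t, by linarith, by linarith, by ring, ?_⟩
  funext e
  simp only [Pi.add_apply, Pi.smul_apply, smul_eq_mul, halfIndicator]
  by_cases heE : e ∈ T.edgeFinset
  · by_cases h1 : e ∈ H <;> by_cases h2 : e ∈ H'
    · rw [if_pos h1, if_pos h2, hE2 e h1 h2]; ring
    · have heD : e ∈ D := Finset.mem_symmDiff.mpr (Or.inl ⟨h1, h2⟩)
      have := (main e (hreach e heD)).2.1 h1 h2
      rw [if_pos h1, if_neg h2, this]; ring
    · have heD : e ∈ D := Finset.mem_symmDiff.mpr (Or.inr ⟨h2, h1⟩)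
      have := (main e (hreach e heD)).2.2 h2 h1
      rw [if_neg h1, if_pos h2, this]; ring
    · rw [if_neg h1, if_neg h2, hE1 e heE h1 h2]; ring
  · have h1 : e ∉ H := fun h => heE (hH.1 h)
    have h2 : e ∉ H' := fun h => heE (hH'.1 h)
    have h0 : y e = 0 := hy.1 e (fun hc => heE (SimpleGraph.mem_edgeFinset.mpr hc))
    rw [if_neg h1, if_neg h2, h0]; ring

end helpers5

/-- Theorem 7.3: two distinct vertices `(1/2)𝟙_{H}` and `(1/2)𝟙_{H'}` of `P_T` are adjacent
(the segment between them is a face, i.e. an extreme subset, of `P_T`) if and only if the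
symmetric difference `H △ H'` is a single leaf-path. -/
theorem stmt9 {V : Type*} [Fintype V] [DecidableEq V] (T : SimpleGraph V)
    [DecidableRel T.Adj] (hconn : T.Connected) (hacyc : T.IsAcyclic)
    (hdeg : ∀ v : V, T.degree v = 1 ∨ T.degree v = 3)
    (H H' : Finset (Sym2 V)) (hH : isLeafPathCollection T H)
    (hH' : isLeafPathCollection T H') (hne : halfIndicator H ≠ halfIndicator H') :
    IsExtreme ℝ {w : Sym2 V → ℝ | memP T w}
        (segment ℝ (halfIndicator H) (halfIndicator H'))
      ↔ isSingleLeafPath T (symmDiff H H') := by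
  have hHH' : H ≠ H' := fun h => hne (by rw [h])
  have hDlpc : isLeafPathCollection T (symmDiff H H') := lpc_symmDiff hH hH'
  have hDne : (symmDiff H H').Nonempty := by
    rw [Finset.nonempty_iff_ne_empty]
    intro h
    exact hHH' (by rwa [← Finset.bot_eq_empty, symmDiff_eq_bot] at h)
  constructor
  · -- extreme ⇒ single leaf path
    intro hext
    refine ⟨hDlpc, hDne, ?_⟩
    rintro ⟨A, B, hAne, hBne, hdisj, hABu, hlpcA, hlpcB⟩
    have hAD : A ⊆ symmDiff H H' := hABu ▸ Finset.subset_union_left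
    have hBD : B ⊆ symmDiff H H' := hABu ▸ Finset.subset_union_right
    set u := halfIndicator (symmDiff H A) with hudef
    set v' := halfIndicator (symmDiff H B) with hvdef
    have hu : memP T u := memP_half (lpc_symmDiff hH hlpcA)
    have hv : memP T v' := memP_half (lpc_symmDiff hH hlpcB)
    -- pointwise identity u + v' = w + w'
    have hid : ∀ e, u e + v' e = halfIndicator H e + halfIndicator H' e := by
      intro e
      rw [hudef, hvdef]
      unfold halfIndicator
      by_cases heA : e ∈ A
      · have heD : e ∈ symmDiff H H' := hAD heA
        have heB : e ∉ B := fun h => Finset.disjoint_left.mp hdisj heA h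
        by_cases heH : e ∈ H
        · have heH' : e ∉ H' := by
            rcases Finset.mem_symmDiff.mp heD with ⟨_, h⟩ | ⟨_, h⟩
            · exact h
            · exact absurd heH h
          have m1 : e ∉ symmDiff H A := by rw [Finset.mem_symmDiff]; tauto
          have m2 : e ∈ symmDiff H B := Finset.mem_symmDiff.mpr (Or.inl ⟨heH, heB⟩)
          rw [if_neg m1, if_pos m2, if_pos heH, if_neg heH']
          ring
        · have heH' : e ∈ H' := by
            rcases Finset.mem_symmDiff.mp heD with ⟨h, _⟩ | ⟨h, _⟩
            · exact absurd h heH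
            · exact h
          have m1 : e ∈ symmDiff H A := Finset.mem_symmDiff.mpr (Or.inr ⟨heA, heH⟩)
          have m2 : e ∉ symmDiff H B := by rw [Finset.mem_symmDiff]; tauto
          rw [if_pos m1, if_neg m2, if_neg heH, if_pos heH']
          ring
      · by_cases heB : e ∈ B
        · have heD : e ∈ symmDiff H H' := hBD heB
          by_cases heH : e ∈ H
          · have heH' : e ∉ H' := by
              rcases Finset.mem_symmDiff.mp heD with ⟨_, h⟩ | ⟨_, h⟩
              · exact h
              · exact absurd heH h
            have m1 : e ∈ symmDiff H A := Finset.mem_symmDiff.mpr (Or.inl ⟨heH, heA⟩)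
            have m2 : e ∉ symmDiff H B := by rw [Finset.mem_symmDiff]; tauto
            rw [if_pos m1, if_neg m2, if_pos heH, if_neg heH']
          · have heH' : e ∈ H' := by
              rcases Finset.mem_symmDiff.mp heD with ⟨h, _⟩ | ⟨h, _⟩
              · exact absurd h heH
              · exact h
            have m1 : e ∉ symmDiff H A := by rw [Finset.mem_symmDiff]; tauto
            have m2 : e ∈ symmDiff H B := Finset.mem_symmDiff.mpr (Or.inr ⟨heB, heH⟩)
            rw [if_neg m1, if_pos m2, if_neg heH, if_pos heH']
        · have heD : e ∉ symmDiff H H' := by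
            intro h
            rcases (hABu ▸ h : e ∈ A ∪ B) |> Finset.mem_union.mp with h' | h'
            · exact heA h'
            · exact heB h'
          by_cases heH : e ∈ H
          · have heH' : e ∈ H' := by
              by_contra h
              exact heD (Finset.mem_symmDiff.mpr (Or.inl ⟨heH, h⟩))
            have m1 : e ∈ symmDiff H A := Finset.mem_symmDiff.mpr (Or.inl ⟨heH, heA⟩)
            have m2 : e ∈ symmDiff H B := Finset.mem_symmDiff.mpr (Or.inl ⟨heH, heB⟩)
            rw [if_pos m1, if_pos m2, if_pos heH, if_pos heH']
          · have heH' : e ∉ H' := by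
              intro h
              exact heD (Finset.mem_symmDiff.mpr (Or.inr ⟨h, heH⟩))
            have m1 : e ∉ symmDiff H A := by rw [Finset.mem_symmDiff]; tauto
            have m2 : e ∉ symmDiff H B := by rw [Finset.mem_symmDiff]; tauto
            rw [if_neg m1, if_neg m2, if_neg heH, if_neg heH']
    set x := (1/2 : ℝ) • u + (1/2 : ℝ) • v' with hxdef
    have hxseg : x ∈ segment ℝ (halfIndicator H) (halfIndicator H') := by
      refine ⟨1/2, 1/2, by norm_num, by norm_num, by norm_num, ?_⟩
      funext e
      simp only [hxdef, Pi.add_apply, Pi.smul_apply, smul_eq_mul]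
      linarith [hid e]
    have hxopen : x ∈ openSegment ℝ u v' :=
      ⟨1/2, 1/2, by norm_num, by norm_num, by norm_num, rfl⟩
    have huseg := hext.2 hu hv hxseg hxopen
    obtain ⟨α, β, hα, hβ, hαβ, hcomb⟩ := huseg
    obtain ⟨e, heA⟩ := hAne
    have heD : e ∈ symmDiff H H' := hAD heA
    have hcombe := congrFun hcomb e
    simp only [Pi.add_apply, Pi.smul_apply, smul_eq_mul] at hcombe
    have hβ1 : α = 0 ∧ β = 1 := by
      by_cases heH : e ∈ H
      · have heH' : e ∉ H' := by
          rcases Finset.mem_symmDiff.mp heD with ⟨_, h⟩ | ⟨_, h⟩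
          · exact h
          · exact absurd heH h
        have hue : u e = 0 := by
          have m1 : e ∉ symmDiff H A := by rw [Finset.mem_symmDiff]; tauto
          simp [hudef, halfIndicator, m1]
        rw [hue] at hcombe
        simp only [halfIndicator, if_pos heH, if_neg heH'] at hcombe
        constructor <;> linarith
      · have heH' : e ∈ H' := by
          rcases Finset.mem_symmDiff.mp heD with ⟨h, _⟩ | ⟨h, _⟩
          · exact absurd h heH
          · exact h
        have hue : u e = 1 / 2 := by
          have m1 : e ∈ symmDiff H A := Finset.mem_symmDiff.mpr (Or.inr ⟨heA, heH⟩)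
          simp [hudef, halfIndicator, m1]
        rw [hue] at hcombe
        simp only [halfIndicator, if_neg heH, if_pos heH'] at hcombe
        constructor <;> linarith
    have huw' : halfIndicator H' = u := by
      rw [← hcomb]
      funext e'
      simp only [Pi.add_apply, Pi.smul_apply, smul_eq_mul, hβ1.1, hβ1.2]
      ring
    have hHA : symmDiff H A = H' := (halfIndicator_inj huw'.symm)
    have hAeq : A = symmDiff H H' := by
      have := congrArg (fun s => symmDiff H s) hHA
      simpa [symmDiff_symmDiff_cancel_left] using this
    obtain ⟨f, hfB⟩ := hBne
    exact Finset.disjoint_left.mp hdisj (hAeq ▸ hBD hfB) hfB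
  · -- single leaf path ⇒ extreme
    intro hsingle
    constructor
    · intro z hz
      obtain ⟨a, b, ha, hb, hab, hcomb⟩ := hz
      have hm := memP_combo (memP_half hH) (memP_half hH') ha hb hab
      have : z = fun e => a * halfIndicator H e + b * halfIndicator H' e := by
        funext e
        rw [← hcomb]
        simp [Pi.add_apply, Pi.smul_apply, smul_eq_mul]
      rw [Set.mem_setOf_eq, this]
      exact hm
    · intro x1 hx1 x2 hx2 x hxseg hxopen
      rw [Set.mem_setOf_eq] at hx1 hx2
      obtain ⟨a, b, ha, hb, hab, hcomb1⟩ := hxopen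
      obtain ⟨c, d, hc, hd, hcd, hcomb2⟩ := hxseg
      have hx : ∀ e, a * x1 e + b * x2 e
          = c * halfIndicator H e + d * halfIndicator H' e := by
        intro e
        have h1 := congrFun hcomb1 e
        have h2 := congrFun hcomb2 e
        simp only [Pi.add_apply, Pi.smul_apply, smul_eq_mul] at h1 h2
        rw [h1, ← h2]
      have hx' : ∀ e, a * x1 e + b * x2 e
          = d * halfIndicator H' e + c * halfIndicator H e := by
        intro e; rw [hx e]; ring
      have hxswap : ∀ e, b * x2 e + a * x1 e
          = c * halfIndicator H e + d * halfIndicator H' e := by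
        intro e; have := hx e; linarith
      have hxswap' : ∀ e, b * x2 e + a * x1 e
          = d * halfIndicator H' e + c * halfIndicator H e := by
        intro e; have := hx e; linarith
      have hba : b + a = 1 := by linarith
      suffices hboth : x1 ∈ segment ℝ (halfIndicator H) (halfIndicator H') ∧
          x2 ∈ segment ℝ (halfIndicator H) (halfIndicator H') from hboth.1
      constructor
      · obtain ⟨hE1, hE2⟩ := derive_E12 hdeg hH hH' hx1 hx2 ha hb hab hcd hx
        refine key_segment hdeg hH hH' hsingle hx1 hE1 hE2 ?_ ?_ ?_
        · intro v hv3 e f hve hvf hef heH heH' hfH hfH'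
          exact rel_same hH hH' hx1 hx2 ha hb hab hx hv3 hve hvf hef heH heH' hfH hfH'
        · intro v hv3 e f hve hvf hef heH' heH hfH' hfH
          exact rel_same hH' hH hx1 hx2 ha hb hab hx' hv3 hve hvf hef heH' heH hfH' hfH
        · intro v hv3 e f hve hvf hef heH heH' hfH' hfH
          exact rel_cross hH hH' hx1 hx2 ha hb hab hcd hx hv3 hve hvf hef heH heH' hfH hfH'
      · obtain ⟨hE1, hE2⟩ := derive_E12 hdeg hH hH' hx2 hx1 hb ha hba hcd hxswap
        refine key_segment hdeg hH hH' hsingle hx2 hE1 hE2 ?_ ?_ ?_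
        · intro v hv3 e f hve hvf hef heH heH' hfH hfH'
          exact rel_same hH hH' hx2 hx1 hb ha hba hxswap hv3 hve hvf hef heH heH' hfH hfH'
        · intro v hv3 e f hve hvf hef heH' heH hfH' hfH
          exact rel_same hH' hH hx2 hx1 hb ha hba hxswap' hv3 hve hvf hef heH' heH hfH' hfH
        · intro v hv3 e f hve hvf hef heH heH' hfH' hfH
          exact rel_cross hH hH' hx2 hx1 hb ha hba hcd hxswap hv3 hve hvf hef heH heH' hfH hfH'
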